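/- The modified uniform rank-minimizing mechanism f^M satisfies equal treatment of equals: if a preference profile p satisfies p_a^{k′} = p_{a′}^{k′} for all k′ = 1,...,k̄(p_a), then (f^M(p))_{ao} = (f^M(p))_{a′o} for all o. -/

import Mathlib

open Finset
open scoped Classical

variable {A O : Type*}

/-- A strict preference ranking: a bijection from object types to positions. -/
abbrev Pref (O : Type*) [Fintype O] := O ≃ Fin (Fintype.card O)

/-- The rank of object `o` under ranking `p` (1 = best). -/
def rk [Fintype O] (p : Pref O) (o : O) : ℕ := (p o : ℕ) + 1

/-- A (probabilistic) assignment. -/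
def IsAssignment [Fintype A] [Fintype O] (q : O → ℕ) (x : A → O → ℝ) : Prop :=
  (∀ a o, 0 ≤ x a o ∧ x a o ≤ 1) ∧ (∀ a, ∑ o, x a o = 1) ∧ (∀ o, ∑ a, x a o ≤ (q o : ℝ))

def IsDeterministic [Fintype A] [Fintype O] (x : A → O → ℝ) : Prop :=
  ∀ a o, x a o = 0 ∨ x a o = 1

/-- The rank value (sum of expected ranks). -/
def RV [Fintype A] [Fintype O] (p : A → Pref O) (x : A → O → ℝ) : ℝ :=
  ∑ a, ∑ o, (rk (p a) o : ℝ) * x a o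

/-- `x` is a rank-minimizing assignment for profile `p`. -/
def RankMin [Fintype A] [Fintype O] (q : O → ℕ) (p : A → Pref O) (x : A → O → ℝ) : Prop :=
  IsAssignment q x ∧ ∀ y, IsAssignment q y → RV p x ≤ RV p y

/-- `x` is wasteful for profile `p`. -/
def Wasteful [Fintype A] [Fintype O] (q : O → ℕ) (p : A → Pref O) (x : A → O → ℝ) : Prop :=
  ∃ o o' a, (∑ a', x a' o) < (q o : ℝ) ∧ 0 < x a o' ∧ rk (p a) o < rk (p a) o'

/-- `k̄(p_a)`: the minimal `k` such that the types ranked at or above `k` have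
total capacity at least `|A|`. -/
noncomputable def kbar [Fintype O] (nA : ℕ) (q : O → ℕ) (p : Pref O) : ℕ :=
  sInf {k | nA ≤ ∑ o ∈ Finset.univ.filter (fun o => rk p o ≤ k), q o}

/-- A deterministic assignment, viewed as a map from agents to objects, is feasible. -/
def DetOK [Fintype A] [Fintype O] (q : O → ℕ) (d : A → O) : Prop :=
  ∀ o, (Finset.univ.filter (fun a => d a = o)).card ≤ q o

/-- The 0-1 matrix of a deterministic assignment. -/
noncomputable def detMat [Fintype A] [Fintype O] (d : A → O) : A → O → ℝ :=
  fun a o => if d a = o then 1 else 0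

/-- The set of deterministic rank-minimizing assignments for `p`
(minimizing over all probabilistic assignments). -/
noncomputable def Ystar [Fintype A] [Fintype O] (q : O → ℕ) (p : A → Pref O) :
    Finset (A → O) :=
  Finset.univ.filter
    (fun d => DetOK q d ∧ ∀ x, IsAssignment q x → RV p (detMat d) ≤ RV p x)

/-- The uniform rank-minimizing mechanism. -/
noncomputable def fU [Fintype A] [Fintype O] (q : O → ℕ) (p : A → Pref O) : A → O → ℝ :=
  fun a o => (∑ d ∈ Ystar q p, detMat d a o) / (Ystar q p).card

/-- Agent `a` (with true ranking `r`) weakly prefers `x` to `x'`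
(first-order stochastic dominance). -/
def WeakPrefAt [Fintype A] [Fintype O] (r : Pref O) (a : A) (x x' : A → O → ℝ) : Prop :=
  ∀ j : ℕ, ∑ o ∈ Finset.univ.filter (fun o => rk r o ≤ j), x' a o ≤
           ∑ o ∈ Finset.univ.filter (fun o => rk r o ≤ j), x a o

/-- Agent `a` strictly prefers `x` to `x'`. -/
def StrictPrefAt [Fintype A] [Fintype O] (r : Pref O) (a : A) (x x' : A → O → ℝ) : Prop :=
  WeakPrefAt r a x x' ∧ ∃ j : ℕ, j < Fintype.card O ∧
    ∑ o ∈ Finset.univ.filter (fun o => rk r o ≤ j), x' a o <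
    ∑ o ∈ Finset.univ.filter (fun o => rk r o ≤ j), x a o

/-- `d` is an outside option demotion strategy for true ranking `r`. -/
def ODS [Fintype O] (null : O) (r d : Pref O) : Prop :=
  (∀ o, rk r o < rk r null → rk d o = rk r o) ∧ rk d null = Fintype.card O

/-- The refusal map `g`: each agent keeps probability on truly acceptable types
and moves all remaining mass to the null type. -/
noncomputable def refuse [Fintype A] [Fintype O] (null : O) (r : A → Pref O)
    (x : A → O → ℝ) : A → O → ℝ :=
  fun a o =>
    if rk (r a) o < rk (r a) null then x a o
    else if o = null then
      ∑ o' ∈ Finset.univ.filter (fun o' => rk (r a) null ≤ rk (r a) o'), x a o'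
    else 0

/-- Equal treatment of equals for a mechanism. -/
def SatisfiesETE [Fintype A] [Fintype O] (q : O → ℕ)
    (f : (A → Pref O) → A → O → ℝ) : Prop :=
  ∀ (p : A → Pref O) (a a' : A),
    (∀ o, rk (p a) o ≤ kbar (Fintype.card A) q (p a) → p a' o = p a o) →
    ∀ o, f p a o = f p a' o

/-- Condition (ii) of the modified mechanism: `b` is one of the `q_o` agents who
rank `∅` at position `l`, agree with `a` above `l`, and have `k̄ = l`. -/
def InGroup [Fintype A] [Fintype O] (q : O → ℕ) (null : O) (p : A → Pref O)
    (a : A) (l : ℕ) (b : A) : Prop :=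
  b ≠ a ∧ rk (p b) null = l ∧
    (∀ o, rk (p b) o < l → rk (p a) o = rk (p b) o) ∧ kbar (Fintype.card A) q (p b) = l

/-- The exceptional profiles (conditions (i)–(iii)) of the modified mechanism. -/
def Exc [Fintype A] [Fintype O] (q : O → ℕ) (null : O) (p : A → Pref O)
    (a : A) (o : O) (l : ℕ) : Prop :=
  rk (p a) o = 1 ∧ 3 ≤ rk (p a) null ∧ 2 ≤ l ∧ l < rk (p a) null ∧
  (Finset.univ.filter (InGroup q null p a l)).card = q o ∧
  (∀ b, b ≠ a → ¬ InGroup q null p a l b → rk (p b) null = 1)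

/-- The modified uniform rank-minimizing mechanism. -/
noncomputable def fM [Fintype A] [Fintype O] (q : O → ℕ) (null : O)
    (p : A → Pref O) : A → O → ℝ :=
  if h : ∃ w : A × O × ℕ, Exc q null p w.1 w.2.1 w.2.2 then
    fun b o' =>
      if b = h.choose.1 then (if rk (p b) o' = 2 then 1 else 0)
      else if InGroup q null p h.choose.1 h.choose.2.2 b then
        (if o' = h.choose.2.1 then 1 else 0)
      else (if o' = null then 1 else 0)
  else fU q p

section Aux

variable [Fintype A] [Fintype O]

lemma rk_pos (r : Pref O) (o : O) : 1 ≤ rk r o := Nat.succ_le_succ (Nat.zero_le _)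

lemma rk_le_card (r : Pref O) (o : O) : rk r o ≤ Fintype.card O := (r o).2

lemma rk_inj (r : Pref O) {o o' : O} (h : rk r o = rk r o') : o = o' :=
  r.injective (Fin.ext (by simpa [rk] using h))

lemma rk_eq_of_eq {r r' : Pref O} {o : O} (h : r' o = r o) : rk r' o = rk r o := by
  simp [rk, h]

lemma eq_of_rk_eq {r r' : Pref O} {o : O} (h : rk r' o = rk r o) : r' o = r o :=
  Fin.ext (by simpa [rk] using h)

lemma card_topset (r : Pref O) (k : ℕ) :
    (Finset.univ.filter fun o => rk r o ≤ k).card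
      = (Finset.univ.filter fun i : Fin (Fintype.card O) => (i : ℕ) + 1 ≤ k).card := by
  apply Finset.card_bij' (fun o _ => r o) (fun i _ => r.symm i) <;> simp [rk]

lemma topset_eq (r r' : Pref O) (K : ℕ) (hag : ∀ o, rk r o ≤ K → r' o = r o)
    {k : ℕ} (hk : k ≤ K) :
    Finset.univ.filter (fun o => rk r' o ≤ k) = Finset.univ.filter (fun o => rk r o ≤ k) := by
  have hsub : Finset.univ.filter (fun o => rk r o ≤ k)
      ⊆ Finset.univ.filter (fun o => rk r' o ≤ k) := by
    intro o ho
    simp only [Finset.mem_filter, Finset.mem_univ, true_and] at ho ⊢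
    rw [rk_eq_of_eq (hag o (ho.trans hk))]; exact ho
  exact (Finset.eq_of_subset_of_card_le hsub
    (le_of_eq (by rw [card_topset r' k, card_topset r k]))).symm

lemma kbar_mem {nA : ℕ} {q : O → ℕ} {null : O} (hnull : nA ≤ q null) (r : Pref O) :
    nA ≤ ∑ o ∈ Finset.univ.filter (fun o => rk r o ≤ kbar nA q r), q o := by
  have hne : rk r null ∈ {k | nA ≤ ∑ o ∈ Finset.univ.filter (fun o => rk r o ≤ k), q o} := by
    have hm : null ∈ Finset.univ.filter (fun o => rk r o ≤ rk r null) := by simp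
    exact hnull.trans (Finset.single_le_sum (fun _ _ => Nat.zero_le _) hm)
  exact Nat.sInf_mem ⟨_, hne⟩

lemma kbar_le_rk_null {nA : ℕ} {q : O → ℕ} {null : O} (hnull : nA ≤ q null) (r : Pref O) :
    kbar nA q r ≤ rk r null := by
  apply Nat.sInf_le
  have hm : null ∈ Finset.univ.filter (fun o => rk r o ≤ rk r null) := by simp
  exact hnull.trans (Finset.single_le_sum (fun _ _ => Nat.zero_le _) hm)

lemma lt_kbar_of_not_mem {nA : ℕ} {q : O → ℕ} {null : O} (hnull : nA ≤ q null) (r : Pref O)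
    {k : ℕ} (hk : ¬ nA ≤ ∑ o ∈ Finset.univ.filter (fun o => rk r o ≤ k), q o) :
    k < kbar nA q r := by
  by_contra hc
  push_neg at hc
  exact hk ((kbar_mem hnull r).trans (Finset.sum_le_sum_of_subset (by
    intro o ho
    simp only [Finset.mem_filter, Finset.mem_univ, true_and] at ho ⊢
    omega)))

lemma kbar_pos {nA : ℕ} {q : O → ℕ} {null : O} (hA : 0 < nA) (hnull : nA ≤ q null)
    (r : Pref O) : 1 ≤ kbar nA q r := by
  have : ¬ nA ≤ ∑ o ∈ Finset.univ.filter (fun o => rk r o ≤ 0), q o := by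
    have he : Finset.univ.filter (fun o => rk r o ≤ 0) = ∅ := by
      apply Finset.filter_false_of_mem
      intro o _
      have := rk_pos r o; omega
    rw [he, Finset.sum_empty]; omega
  exact lt_kbar_of_not_mem hnull r this

lemma kbar_agree {nA : ℕ} {q : O → ℕ} {null : O} (hnull : nA ≤ q null) (r r' : Pref O)
    (hag : ∀ o, rk r o ≤ kbar nA q r → r' o = r o) :
    kbar nA q r' = kbar nA q r := by
  have h1 : kbar nA q r' ≤ kbar nA q r := by
    apply Nat.sInf_le
    show nA ≤ _
    rw [topset_eq r r' (kbar nA q r) hag le_rfl]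
    exact kbar_mem hnull r
  have h2 : kbar nA q r ≤ kbar nA q r' := by
    apply Nat.sInf_le
    show nA ≤ _
    rw [← topset_eq r r' (kbar nA q r) hag h1]
    exact kbar_mem hnull r'
  omega

end Aux
section Aux2

variable [Fintype A] [Fintype O]

lemma RV_detMat (p : A → Pref O) (d : A → O) :
    RV p (detMat d) = ∑ b, (rk (p b) (d b) : ℝ) := by
  unfold RV detMat
  refine Finset.sum_congr rfl fun b _ => ?_
  rw [Finset.sum_eq_single (d b) (fun o _ ho => by simp [Ne.symm ho])
    (fun hm => absurd (Finset.mem_univ _) hm)]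
  simp

lemma detMat_assign {q : O → ℕ} {d : A → O} (hd : DetOK q d) :
    IsAssignment q (detMat d) := by
  refine ⟨fun a o => by unfold detMat; split <;> norm_num,
    fun a => by simp [detMat], fun o => ?_⟩
  have : ∑ a, detMat d a o = ((Finset.univ.filter fun a => d a = o).card : ℝ) := by
    simp [detMat, Finset.sum_boole]
  rw [this]
  exact_mod_cast hd o

lemma mem_Ystar_iff {q : O → ℕ} {p : A → Pref O} {d : A → O} :
    d ∈ Ystar q p ↔ DetOK q d ∧ ∀ x, IsAssignment q x → RV p (detMat d) ≤ RV p x := by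
  simp [Ystar]

lemma Ystar_rank_le {q : O → ℕ} {null : O} (hA : 0 < Fintype.card A)
    (hnull : Fintype.card A ≤ q null) {p : A → Pref O} {d : A → O}
    (hd : d ∈ Ystar q p) (b : A) :
    rk (p b) (d b) ≤ kbar (Fintype.card A) q (p b) := by
  by_contra hlt
  push_neg at hlt
  obtain ⟨hdet, hmin⟩ := mem_Ystar_iff.mp hd
  set K := kbar (Fintype.card A) q (p b) with hK
  set S := Finset.univ.filter (fun o => rk (p b) o ≤ K) with hS
  have hcap : Fintype.card A ≤ ∑ o ∈ S, q o := kbar_mem hnull (p b)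
  have hocc : ∑ o ∈ S, (Finset.univ.filter fun a => d a = o).card < Fintype.card A := by
    have heq : ∑ o ∈ S, (Finset.univ.filter fun a => d a = o).card
        = (Finset.univ.filter fun a => d a ∈ S).card := by
      rw [Finset.card_eq_sum_card_fiberwise (f := d) (s := Finset.univ.filter fun a => d a ∈ S) (t := S)
        (fun a ha => (Finset.mem_filter.mp ha).2)]
      refine Finset.sum_congr rfl fun o ho => congrArg Finset.card ?_
      ext c
      simp only [Finset.mem_filter, Finset.mem_univ, true_and]
      constructor
      · intro h2; exact ⟨by rw [h2]; exact ho, h2⟩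
      · rintro ⟨-, h2⟩; exact h2
    have hsub : (Finset.univ.filter fun a => d a ∈ S) ⊆ Finset.univ.erase b := by
      intro c hc
      simp only [Finset.mem_filter, Finset.mem_univ, true_and] at hc
      simp only [Finset.mem_erase, Finset.mem_univ, and_true]
      intro hcb
      subst hcb
      simp only [hS, Finset.mem_filter, Finset.mem_univ, true_and] at hc
      omega
    have := Finset.card_le_card hsub
    rw [Finset.card_erase_of_mem (Finset.mem_univ b), Finset.card_univ] at this
    omega
  have hex : ∃ o ∈ S, (Finset.univ.filter fun a => d a = o).card < q o := by
    by_contra hc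
    push_neg at hc
    have := Finset.sum_le_sum hc
    omega
  obtain ⟨o, hoS, hfree⟩ := hex
  have hrko : rk (p b) o ≤ K := by
    rw [hS] at hoS
    simpa using hoS
  have hdet' : DetOK q (Function.update d b o) := by
    intro o'
    by_cases ho' : o' = o
    · rw [ho']
      have hsub : (Finset.univ.filter fun c => Function.update d b o c = o)
          ⊆ insert b (Finset.univ.filter fun c => d c = o) := by
        intro c hc
        simp only [Finset.mem_filter, Finset.mem_univ, true_and,
          Function.update_apply] at hc
        by_cases hcb : c = b
        · exact Finset.mem_insert.mpr (Or.inl hcb)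
        · rw [if_neg hcb] at hc
          exact Finset.mem_insert.mpr (Or.inr (by
            simp only [Finset.mem_filter, Finset.mem_univ, true_and]; exact hc))
      have h1 := Finset.card_le_card hsub
      have h2 := Finset.card_insert_le b (Finset.univ.filter fun c => d c = o)
      omega
    · have hsub : (Finset.univ.filter fun c => Function.update d b o c = o')
          ⊆ Finset.univ.filter fun c => d c = o' := by
        intro c hc
        simp only [Finset.mem_filter, Finset.mem_univ, true_and,
          Function.update_apply] at hc ⊢
        by_cases hcb : c = b
        · rw [if_pos hcb] at hc; exact absurd hc.symm ho'
        · rwa [if_neg hcb] at hc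
      exact (Finset.card_le_card hsub).trans (hdet o')
  have hle := hmin _ (detMat_assign hdet')
  rw [RV_detMat, RV_detMat] at hle
  have hstrict : ∑ c, (rk (p c) (Function.update d b o c) : ℝ)
      < ∑ c, (rk (p c) (d c) : ℝ) := by
    refine Finset.sum_lt_sum ?_ ⟨b, Finset.mem_univ b, ?_⟩
    · intro c _
      rw [Function.update_apply]
      by_cases hcb : c = b
      · rw [if_pos hcb]
        have hcc : rk (p c) o ≤ rk (p c) (d c) := by
          rw [hcb]; exact hrko.trans hlt.le
        exact_mod_cast hcc
      · rw [if_neg hcb]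
    · rw [Function.update_self]
      exact_mod_cast hrko.trans_lt hlt
  linarith

lemma Ystar_swap {q : O → ℕ} {null : O} (hA : 0 < Fintype.card A)
    (hnull : Fintype.card A ≤ q null) {p : A → Pref O} {a a' : A}
    (h : ∀ o, rk (p a) o ≤ kbar (Fintype.card A) q (p a) → p a' o = p a o)
    {d : A → O} (hd : d ∈ Ystar q p) :
    (d ∘ (Equiv.swap a a')) ∈ Ystar q p := by
  obtain ⟨hdet, hmin⟩ := mem_Ystar_iff.mp hd
  set σ := Equiv.swap a a' with hσ
  set K := kbar (Fintype.card A) q (p a) with hK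
  have key : ∀ c, (rk (p (σ c)) (d c) : ℝ) = rk (p c) (d c) := by
    intro c
    rcases eq_or_ne c a with rfl | hca
    · rw [hσ, Equiv.swap_apply_left]
      have h1 : rk (p c) (d c) ≤ K := Ystar_rank_le hA hnull hd c
      rw [rk_eq_of_eq (h (d c) h1)]
    rcases eq_or_ne c a' with rfl | hca'
    · rw [hσ, Equiv.swap_apply_right]
      have hkb : kbar (Fintype.card A) q (p c) = K := kbar_agree hnull (p a) (p c) h
      have h1 : rk (p c) (d c) ≤ K := by
        rw [← hkb]; exact Ystar_rank_le hA hnull hd c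
      have h2 : rk (p a) (d c) ≤ K := by
        have hm : d c ∈ Finset.univ.filter (fun o => rk (p c) o ≤ K) := by simpa using h1
        rw [topset_eq (p a) (p c) K h le_rfl] at hm
        simpa using hm
      rw [rk_eq_of_eq (h (d c) h2)]
    · rw [hσ, Equiv.swap_apply_of_ne_of_ne hca hca']
  have hRV : RV p (detMat (d ∘ σ)) = RV p (detMat d) := by
    rw [RV_detMat, RV_detMat]
    have h1 : ∀ c, (rk (p c) (d (σ c)) : ℝ) = rk (p (σ c)) (d (σ c)) := by
      intro c
      have := key (σ c)
      rwa [hσ, Equiv.swap_apply_self] at this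
    calc ∑ c, (rk (p c) ((d ∘ σ) c) : ℝ)
        = ∑ c, (rk (p (σ c)) (d (σ c)) : ℝ) := Finset.sum_congr rfl fun c _ => h1 c
      _ = ∑ c, (rk (p c) (d c) : ℝ) := Equiv.sum_comp σ fun c => (rk (p c) (d c) : ℝ)
  refine mem_Ystar_iff.mpr ⟨?_, fun x hx => hRV ▸ hmin x hx⟩
  intro o
  have hcd : (Finset.univ.filter fun c => (d ∘ σ) c = o).card
      = (Finset.univ.filter fun c => d c = o).card := by
    apply Finset.card_bij' (fun c _ => σ c) (fun c _ => σ.symm c) <;>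
      simp [Function.comp]
  rw [hcd]; exact hdet o

lemma fU_ete {q : O → ℕ} {null : O} (hA : 0 < Fintype.card A)
    (hnull : Fintype.card A ≤ q null) {p : A → Pref O} {a a' : A}
    (h : ∀ o, rk (p a) o ≤ kbar (Fintype.card A) q (p a) → p a' o = p a o)
    (o : O) : fU q p a o = fU q p a' o := by
  unfold fU
  congr 1
  apply Finset.sum_bij' (fun d _ => d ∘ (Equiv.swap a a')) (fun d _ => d ∘ (Equiv.swap a a'))
    (fun d hd => Ystar_swap hA hnull h hd) (fun d hd => Ystar_swap hA hnull h hd)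
  · intro d _
    funext c
    simp [Function.comp, Equiv.swap_apply_self]
  · intro d _
    funext c
    simp [Function.comp, Equiv.swap_apply_self]
  · intro d _
    simp [detMat, Function.comp, Equiv.swap_apply_right]

end Aux2

/-- Proposition 4: the modified uniform rank-minimizing mechanism
satisfies equal treatment of equals. -/
theorem stmt17 [Fintype A] [Fintype O]
    (hA : 2 ≤ Fintype.card A) (hO : 3 ≤ Fintype.card O)
    (q : O → ℕ) (null : O) (hnull : Fintype.card A ≤ q null)
    (p : A → Pref O) (a a' : A)
    (h : ∀ o, rk (p a) o ≤ kbar (Fintype.card A) q (p a) → p a' o = p a o) :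
    ∀ o, fM q null p a o = fM q null p a' o := by
  intro o
  have hA1 : 0 < Fintype.card A := by omega
  by_cases haa : a = a'
  · rw [haa]
  by_cases hexc : ∃ w : A × O × ℕ, Exc q null p w.1 w.2.1 w.2.2
  · rw [fM, dif_pos hexc]
    have hw := hexc.choose_spec
    set w := hexc.choose with hwdef
    clear_value w
    obtain ⟨a₀, o₀, l⟩ := w
    dsimp only at hw ⊢
    obtain ⟨hr1, hr3, hl2, hll, hcard, hrest⟩ := hw
    by_cases ha0 : a = a₀
    · subst ha0
      have ha'0 : a' = a := by
        by_contra ha'0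
        by_cases hg' : InGroup q null p a l a'
        · obtain ⟨_, hnl', hag', hk'⟩ := hg'
          -- l - 1 is not in the capacity set for p a'
          have hnm : ¬ Fintype.card A ≤
              ∑ x ∈ Finset.univ.filter (fun x => rk (p a') x ≤ l - 1), q x := by
            intro hmem
            have h2 : kbar (Fintype.card A) q (p a') ≤ l - 1 := by
              unfold kbar; exact Nat.sInf_le hmem
            omega
          have hag10 : ∀ x, rk (p a') x ≤ l - 1 → p a x = p a' x := by
            intro x hx
            exact eq_of_rk_eq (hag' x (by omega))
          have hnm0 : ¬ Fintype.card A ≤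
              ∑ x ∈ Finset.univ.filter (fun x => rk (p a) x ≤ l - 1), q x := by
            rwa [topset_eq (p a') (p a) (l - 1) hag10 le_rfl]
          have hK0 : l ≤ kbar (Fintype.card A) q (p a) := by
            have := lt_kbar_of_not_mem hnull (p a) hnm0
            omega
          have hlt : l - 1 < Fintype.card O := by
            have := rk_le_card (p a) null
            omega
          set ol := (p a).symm ⟨l - 1, hlt⟩ with hol
          have hrkol : rk (p a) ol = l := by
            simp only [hol, rk, Equiv.apply_symm_apply]
            omega
          have hval := h ol (by rw [hrkol]; exact hK0)
          have hrka' : rk (p a') ol = l := by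
            rw [rk_eq_of_eq hval]; exact hrkol
          have : ol = null := rk_inj (p a') (hrka'.trans hnl'.symm)
          rw [this] at hrkol
          omega
        · have h1 := hrest a' ha'0 hg'
          have hlt0 : 0 < Fintype.card O := by omega
          set o1 := (p a).symm ⟨0, hlt0⟩ with ho1
          have hrk1 : rk (p a) o1 = 1 := by
            simp only [ho1, rk, Equiv.apply_symm_apply]
          have hval := h o1 (by rw [hrk1]; exact kbar_pos hA1 hnull (p a))
          have hrka' : rk (p a') o1 = 1 := by
            rw [rk_eq_of_eq hval]; exact hrk1
          have : o1 = null := rk_inj (p a') (hrka'.trans h1.symm)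
          rw [this] at hrk1
          omega
      rw [ha'0]
    by_cases hg : InGroup q null p a₀ l a
    · have hgc := hg
      obtain ⟨hga, hgnull, hgag, hgk⟩ := hg
      have hKa : kbar (Fintype.card A) q (p a) = l := hgk
      have hpn := h null (by rw [hKa]; omega)
      have hrn' : rk (p a') null = l := by rw [rk_eq_of_eq hpn]; exact hgnull
      have ha'0 : a' ≠ a₀ := by
        intro e; rw [e] at hrn'; omega
      have hg' : InGroup q null p a₀ l a' := by
        refine ⟨ha'0, hrn', ?_, ?_⟩
        · intro x hx
          have hset := topset_eq (p a) (p a') (kbar (Fintype.card A) q (p a)) h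
            (k := l) (le_of_eq hKa.symm)
          have hxa : rk (p a) x ≤ l := by
            have hm : x ∈ Finset.univ.filter (fun x => rk (p a') x ≤ l) := by
              simp only [Finset.mem_filter, Finset.mem_univ, true_and]; omega
            rw [hset] at hm
            simpa using hm
          have hvx : rk (p a') x = rk (p a) x :=
            rk_eq_of_eq (h x (by rw [hKa]; exact hxa))
          rw [hvx]
          exact hgag x (by omega)
        · rw [kbar_agree hnull (p a) (p a') h, hKa]
      simp only [if_neg hga, if_neg ha'0, if_pos hgc, if_pos hg']
    · have h1 : rk (p a) null = 1 := hrest a ha0 hg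
      have hKa : kbar (Fintype.card A) q (p a) = 1 := by
        have hle := kbar_le_rk_null hnull (p a)
        have hge := kbar_pos hA1 hnull (p a)
        omega
      have hpn := h null (by omega)
      have h1' : rk (p a') null = 1 := by rw [rk_eq_of_eq hpn]; exact h1
      have ha'0 : a' ≠ a₀ := by
        intro e; rw [e] at h1'; omega
      have hg' : ¬ InGroup q null p a₀ l a' := by
        rintro ⟨-, hn, -, -⟩
        omega
      simp only [if_neg ha0, if_neg ha'0, if_neg hg, if_neg hg']
  · rw [fM, dif_neg hexc]
    exact fU_ete hA1 hnull h o
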